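/- Let M be a separable normed L^0(m)-module and (v_n)_{n∈ℕ} a countable dense subset. Let M_n be the closed submodule generated by {v_1,…,v_n}, and let ι_n : M_n ↪ M and ι_{nm} : M_n ↪ M_m (n ≤ m) be the inclusions. Then (M, {ι_n}) is the direct limit of the direct system ({M_n}, {ι_{nm}}) of finitely generated normed L^0(m)-modules. -/

import Mathlib

open MeasureTheory Filter

noncomputable section

variable {X : Type*} [MeasurableSpace X]

/-- `L⁰(μ)`: real-valued functions up to `μ`-a.e. equality, as a commutative ring. -/
instance L0.instCommRing {μ : Measure X} : CommRing (X →ₘ[μ] ℝ) where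
  __ : AddCommGroup (X →ₘ[μ] ℝ) := inferInstance
  __ : CommMonoid (X →ₘ[μ] ℝ) := inferInstance
  left_distrib a b c := AEEqFun.toGerm_injective <| by
    simp only [AEEqFun.mul_toGerm, AEEqFun.add_toGerm]; ring
  right_distrib a b c := AEEqFun.toGerm_injective <| by
    simp only [AEEqFun.mul_toGerm, AEEqFun.add_toGerm]; ring
  zero_mul a := AEEqFun.toGerm_injective <| by
    simp only [AEEqFun.mul_toGerm, AEEqFun.zero_toGerm]; ring
  mul_zero a := AEEqFun.toGerm_injective <| by
    simp only [AEEqFun.mul_toGerm, AEEqFun.zero_toGerm]; ring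

/-- A pointwise seminorm on an `L⁰(μ)`-module, with values in `L⁰(μ)`
(ordered by the `μ`-a.e. order). -/
structure PtwiseSeminorm (μ : Measure X) (M : Type*) [AddCommGroup M]
    [Module (X →ₘ[μ] ℝ) M] where
  pn : M → X →ₘ[μ] ℝ
  nonneg : ∀ v, 0 ≤ pn v
  add_le : ∀ v w, pn (v + w) ≤ pn v + pn w
  smul_eq : ∀ (f : X →ₘ[μ] ℝ) (v : M), pn (f • v) = |f| * pn v

/-- A pointwise seminorm is a pointwise norm if `|v| = 0` a.e. implies `v = 0`. -/
def PtwiseSeminorm.IsNorm {μ : Measure X} {M : Type*} [AddCommGroup M]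
    [Module (X →ₘ[μ] ℝ) M] (N : PtwiseSeminorm μ M) : Prop :=
  ∀ v, N.pn v = 0 → v = 0

/-- The distance `d(v,w) = ∫ min(|v-w|,1) dm'` associated with a pointwise
(semi)norm `pnorm` (with subtraction `sub`). -/
def pd {μ : Measure X} (m' : Measure X) {M : Type*}
    (pnorm : M → X →ₘ[μ] ℝ) (sub : M → M → M) (v w : M) : ℝ :=
  ∫ x, min ((pnorm (sub v w)) x) 1 ∂m'

/-- Sequential continuity with respect to two distance functions. -/
def SeqCont {A B : Type*} (dA : A → A → ℝ) (dB : B → B → ℝ) (f : A → B) : Prop :=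
  ∀ (u : ℕ → A) (a : A), Tendsto (fun n => dA (u n) a) atTop (nhds 0) →
    Tendsto (fun n => dB (f (u n)) (f a)) atTop (nhds 0)

/-- Completeness with respect to a distance function. -/
def CompleteWith {A : Type*} (d : A → A → ℝ) : Prop :=
  ∀ u : ℕ → A, (∀ ε > 0, ∃ k, ∀ n ≥ k, ∀ p ≥ k, d (u n) (u p) < ε) →
    ∃ a, Tendsto (fun n => d (u n) a) atTop (nhds 0)

/-- A normed `L⁰(μ)`-module: an `L⁰(μ)`-module with a pointwise norm that is
complete for the induced distance (via the auxiliary probability measure `m'`). -/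
structure NormedL0Module (μ m' : Measure X) where
  carrier : Type*
  ag : AddCommGroup carrier
  mo : Module (X →ₘ[μ] ℝ) carrier
  pn : carrier → X →ₘ[μ] ℝ
  pn_nonneg : ∀ v, 0 ≤ pn v
  pn_add_le : ∀ v w, pn (v + w) ≤ pn v + pn w
  pn_smul : ∀ (f : X →ₘ[μ] ℝ) v, pn (f • v) = |f| * pn v
  pn_eq_zero : ∀ v, pn v = 0 → v = 0
  complete : CompleteWith (pd m' pn (fun a b => a - b))

attribute [instance] NormedL0Module.ag NormedL0Module.mo

variable {μ m' : Measure X}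

/-- A morphism of normed `L⁰(μ)`-modules: `L⁰`-linear with `|φ(v)| ≤ |v|` a.e. -/
structure NMHom (M N : NormedL0Module μ m') where
  toFun : M.carrier → N.carrier
  map_add' : ∀ v w, toFun (v + w) = toFun v + toFun w
  map_smul' : ∀ (f : X →ₘ[μ] ℝ) v, toFun (f • v) = f • toFun v
  bound' : ∀ v, N.pn (toFun v) ≤ M.pn v

/-- The identity morphism. -/
def NMHom.id (M : NormedL0Module μ m') : NMHom M M :=
  ⟨fun v => v, fun _ _ => rfl, fun _ _ => rfl, fun _ => le_rfl⟩

/-- A direct system of normed `L⁰(μ)`-modules over a preordered index set. -/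
structure DirSystem (μ m' : Measure X) (I : Type*) [Preorder I] where
  obj : I → NormedL0Module.{_, u_3} μ m'
  map : ∀ i j, i ≤ j → NMHom (obj i) (obj j)
  map_self : ∀ i v, (map i i le_rfl).toFun v = v
  map_comp : ∀ i j k (hij : i ≤ j) (hjk : j ≤ k) v,
    (map j k hjk).toFun ((map i j hij).toFun v) = (map i k (hij.trans hjk)).toFun v

/-- An inverse system of normed `L⁰(μ)`-modules over a preordered index set. -/
structure InvSystem (μ m' : Measure X) (I : Type*) [Preorder I] where
  obj : I → NormedL0Module.{_, u_3} μ m'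
  map : ∀ i j, i ≤ j → NMHom (obj j) (obj i)
  map_self : ∀ i v, (map i i le_rfl).toFun v = v
  map_comp : ∀ i j k (hij : i ≤ j) (hjk : j ≤ k) v,
    (map i j hij).toFun ((map j k hjk).toFun v) = (map i k (hij.trans hjk)).toFun v

/-- `(L, ι)` is a direct limit of the system `(obj, map)`: it is a target and
every target factors uniquely through it. -/
structure IsDirectLimit {I : Type*} [Preorder I] (obj : I → NormedL0Module μ m')
    (map : ∀ i j, i ≤ j → (obj i).carrier → (obj j).carrier)
    (L : NormedL0Module μ m') (can : ∀ i, NMHom (obj i) L) : Prop where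
  compat : ∀ i j (h : i ≤ j) v, (can j).toFun (map i j h v) = (can i).toFun v
  universal : ∀ (T : NormedL0Module.{_, u_5} μ m') (psi : ∀ i, NMHom (obj i) T),
    (∀ i j (h : i ≤ j) v, (psi j).toFun (map i j h v) = (psi i).toFun v) →
    ∃! F : NMHom L T, ∀ i v, F.toFun ((can i).toFun v) = (psi i).toFun v

/-- `(L, pr)` is an inverse limit of the system `(obj, map)`: it is a cone and
every cone factors uniquely through it. -/
structure IsInverseLimit {I : Type*} [Preorder I] (obj : I → NormedL0Module μ m')
    (map : ∀ i j, i ≤ j → (obj j).carrier → (obj i).carrier)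
    (L : NormedL0Module μ m') (pr : ∀ i, NMHom L (obj i)) : Prop where
  compat : ∀ i j (h : i ≤ j) v, map i j h ((pr j).toFun v) = (pr i).toFun v
  universal : ∀ (T : NormedL0Module.{_, u_5} μ m') (Q : ∀ i, NMHom T (obj i)),
    (∀ i j (h : i ≤ j) w, map i j h ((Q j).toFun w) = (Q i).toFun w) →
    ∃! F : NMHom T L, ∀ i w, (pr i).toFun (F.toFun w) = (Q i).toFun w

/-- A continuous `L⁰(μ)`-linear map between normed `L⁰(μ)`-modules
(an element of `Hom(M,N)`). -/
structure CLM (M N : NormedL0Module μ m') where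
  toFun : M.carrier → N.carrier
  map_add' : ∀ v w, toFun (v + w) = toFun v + toFun w
  map_smul' : ∀ (f : X →ₘ[μ] ℝ) v, toFun (f • v) = f • toFun v
  cont' : SeqCont (pd m' M.pn (fun a b => a - b)) (pd m' N.pn (fun a b => a - b)) toFun

/-- An element of the dual module `M* = Hom(M, L⁰(μ))`. -/
structure DualElem (M : NormedL0Module μ m') where
  toFun : M.carrier → X →ₘ[μ] ℝ
  map_add' : ∀ v w, toFun (v + w) = toFun v + toFun w
  map_smul' : ∀ (f : X →ₘ[μ] ℝ) v, toFun (f • v) = f * toFun v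
  cont' : SeqCont (pd m' M.pn (fun a b => a - b))
    (pd m' (fun g : X →ₘ[μ] ℝ => |g|) (fun a b => a - b)) toFun

namespace Stmt10
variable {X : Type*} [MeasurableSpace X] {μ m' : Measure X}

noncomputable def pdi (m' : Measure X) {μ : Measure X} (g : X →ₘ[μ] ℝ) : ℝ :=
  ∫ x, min (g x) 1 ∂m'

theorem ae_mono (hac2 : m' ≪ μ) {p : X → Prop} (h : ∀ᵐ x ∂μ, p x) : ∀ᵐ x ∂m', p x :=
  h.filter_mono hac2.ae_le

theorem ae_mono' (hac1 : μ ≪ m') {p : X → Prop} (h : ∀ᵐ x ∂m', p x) : ∀ᵐ x ∂μ, p x :=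
  h.filter_mono hac1.ae_le

theorem le_iff {f g : X →ₘ[μ] ℝ} : f ≤ g ↔ ∀ᵐ x ∂μ, f x ≤ g x :=
  AEEqFun.coeFn_le.symm

theorem nonneg_ae {g : X →ₘ[μ] ℝ} (hg : 0 ≤ g) : ∀ᵐ x ∂μ, 0 ≤ g x := by
  filter_upwards [le_iff.1 hg, AEEqFun.coeFn_zero (β := ℝ) (μ := μ)] with x h1 h2
  rw [h2, Pi.zero_apply] at h1; exact h1

theorem meas' (hac2 : m' ≪ μ) (g : X →ₘ[μ] ℝ) :
    AEStronglyMeasurable (fun x => min (g x) 1) m' :=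
  ((g.aestronglyMeasurable).mono_ac hac2).inf aestronglyMeasurable_const

theorem intble (hac2 : m' ≪ μ) [IsProbabilityMeasure m'] {g : X →ₘ[μ] ℝ} (hg : 0 ≤ g) :
    Integrable (fun x => min (g x) 1) m' := by
  refine Integrable.mono' (integrable_const 1) (meas' hac2 g) ?_
  filter_upwards [ae_mono hac2 (nonneg_ae hg)] with x hx
  rw [Real.norm_eq_abs, abs_le]
  constructor
  · have : (0:ℝ) ≤ min (g x) 1 := le_min hx zero_le_one
    linarith
  · exact min_le_right _ _

theorem pdi_nonneg (hac2 : m' ≪ μ) {g : X →ₘ[μ] ℝ} (hg : 0 ≤ g) : 0 ≤ pdi m' g :=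
  integral_nonneg_of_ae <| by
    filter_upwards [ae_mono hac2 (nonneg_ae hg)] with x hx
    exact le_min hx zero_le_one

theorem pdi_mono (hac2 : m' ≪ μ) [IsProbabilityMeasure m'] {g h : X →ₘ[μ] ℝ}
    (hg : 0 ≤ g) (hgh : g ≤ h) : pdi m' g ≤ pdi m' h := by
  refine integral_mono_ae (intble hac2 hg) (intble hac2 (hg.trans hgh)) ?_
  filter_upwards [ae_mono hac2 (le_iff.1 hgh)] with x hx
  exact min_le_min hx le_rfl

theorem pdi_add_le (hac2 : m' ≪ μ) [IsProbabilityMeasure m'] {g h : X →ₘ[μ] ℝ}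
    (hg : 0 ≤ g) (hh : 0 ≤ h) : pdi m' (g + h) ≤ pdi m' g + pdi m' h := by
  have hgh : (0:X →ₘ[μ] ℝ) ≤ g + h := by
    rw [le_iff]
    filter_upwards [nonneg_ae hg, nonneg_ae hh, AEEqFun.coeFn_add g h,
      AEEqFun.coeFn_zero (β := ℝ) (μ := μ)] with x h1 h2 h3 h4
    rw [h3, h4, Pi.zero_apply, Pi.add_apply]; positivity
  rw [pdi, pdi, pdi, ← integral_add (intble hac2 hg) (intble hac2 hh)]
  refine integral_mono_ae (intble hac2 hgh)
    ((intble hac2 hg).add (intble hac2 hh)) ?_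
  filter_upwards [ae_mono hac2 (nonneg_ae hg), ae_mono hac2 (nonneg_ae hh),
    ae_mono hac2 ((AEEqFun.coeFn_add g h) : _)] with x h1 h2 h3
  rw [h3, Pi.add_apply]
  rcases le_total (g x) 1 with h4 | h4 <;> rcases le_total (h x) 1 with h5 | h5 <;>
    rcases le_total (g x + h x) 1 with h6 | h6 <;>
    simp [min_eq_left, min_eq_right, min_def] <;> split_ifs <;> linarith

theorem pdi_eq_zero (hac1 : μ ≪ m') (hac2 : m' ≪ μ) [IsProbabilityMeasure m']
    {g : X →ₘ[μ] ℝ} (hg : 0 ≤ g) (h : pdi m' g ≤ 0) : g = 0 := by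
  have h0 : pdi m' g = 0 := le_antisymm h (pdi_nonneg hac2 hg)
  have := (integral_eq_zero_iff_of_nonneg_ae ?_ (intble hac2 hg)).1 h0
  · refine AEEqFun.ext ?_
    filter_upwards [ae_mono' hac1 this, nonneg_ae hg,
      AEEqFun.coeFn_zero (β := ℝ) (μ := μ)] with x h1 h2 h3
    rw [h3, Pi.zero_apply]
    by_contra hne
    have hgx : 0 < g x := lt_of_le_of_ne h2 (Ne.symm hne)
    have : (0:ℝ) < min (g x) 1 := lt_min hgx zero_lt_one
    rw [Pi.zero_apply] at h1; linarith [h1]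
  · filter_upwards [ae_mono hac2 (nonneg_ae hg)] with x hx
    exact le_min hx zero_le_one


/-- If `a ≤ b + h k` with `0 ≤ h k` and `pdi (h k) → 0`, then `a ≤ b`. -/
theorem key_le (hac1 : μ ≪ m') (hac2 : m' ≪ μ) [IsProbabilityMeasure m']
    {a b : X →ₘ[μ] ℝ} {h : ℕ → X →ₘ[μ] ℝ} {c : ℕ → ℝ}
    (hh : ∀ k, 0 ≤ h k) (hle : ∀ k, a ≤ b + h k)
    (hb : ∀ k, pdi m' (h k) ≤ c k) (hc : Tendsto c atTop (nhds 0)) : a ≤ b := by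
  set e : X →ₘ[μ] ℝ := (a - b) ⊔ 0 with he
  have he0 : 0 ≤ e := le_sup_right
  have hek : ∀ k, e ≤ h k := by
    intro k
    rw [le_iff]
    filter_upwards [le_iff.1 (hle k), nonneg_ae (hh k), AEEqFun.coeFn_sup (a - b) 0,
      AEEqFun.coeFn_sub a b, AEEqFun.coeFn_add b (h k),
      AEEqFun.coeFn_zero (β := ℝ) (μ := μ)] with x h1 h2 h3 h4 h5 h6
    rw [h3, h4, h6, Pi.sub_apply, Pi.zero_apply]
    rw [h5, Pi.add_apply] at h1
    exact sup_le (by linarith) h2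
  have h1 : pdi m' e ≤ 0 := by
    refine le_of_tendsto_of_tendsto tendsto_const_nhds hc (Eventually.of_forall fun k => ?_)
    exact (pdi_mono hac2 he0 (hek k)).trans (hb k)
  have h2 : e = 0 := pdi_eq_zero hac1 hac2 he0 h1
  rw [le_iff]
  have h3 := AEEqFun.ext_iff.1 h2
  filter_upwards [h3, AEEqFun.coeFn_sup (a - b) 0, AEEqFun.coeFn_sub a b,
    AEEqFun.coeFn_zero (β := ℝ) (μ := μ)] with x h4 h5 h6 h7
  rw [he] at h4
  rw [h5, h6, h7, Pi.sub_apply, Pi.zero_apply] at h4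
  have h8 : a x - b x ≤ 0 := sup_eq_right.mp h4
  linarith

theorem key_eq (hac1 : μ ≪ m') (hac2 : m' ≪ μ) [IsProbabilityMeasure m']
    {a : X →ₘ[μ] ℝ} {h : ℕ → X →ₘ[μ] ℝ} {c : ℕ → ℝ} (ha : 0 ≤ a)
    (hh : ∀ k, 0 ≤ h k) (hle : ∀ k, a ≤ h k)
    (hb : ∀ k, pdi m' (h k) ≤ c k) (hc : Tendsto c atTop (nhds 0)) : a = 0 := by
  refine le_antisymm ?_ ha
  exact key_le hac1 hac2 hh (fun k => by simpa using hle k) hb hc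


theorem mul_nonneg' {c h : X →ₘ[μ] ℝ} (hc : 0 ≤ c) (hh : 0 ≤ h) : 0 ≤ c * h := by
  rw [le_iff]
  filter_upwards [nonneg_ae hc, nonneg_ae hh, AEEqFun.coeFn_mul c h,
    AEEqFun.coeFn_zero (β := ℝ) (μ := μ)] with x h1 h2 h3 h4
  rw [h3, h4, Pi.mul_apply, Pi.zero_apply]; positivity

theorem mul_le_mul_left' {c a b : X →ₘ[μ] ℝ} (hc : 0 ≤ c) (hab : a ≤ b) :
    c * a ≤ c * b := by
  rw [le_iff]
  filter_upwards [nonneg_ae hc, le_iff.1 hab, AEEqFun.coeFn_mul c a,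
    AEEqFun.coeFn_mul c b] with x h1 h2 h3 h4
  rw [h3, h4, Pi.mul_apply, Pi.mul_apply]
  exact mul_le_mul_of_nonneg_left h2 h1

theorem add_le_add' {a b c d : X →ₘ[μ] ℝ} (h1 : a ≤ b) (h2 : c ≤ d) :
    a + c ≤ b + d := by
  rw [le_iff]
  filter_upwards [le_iff.1 h1, le_iff.1 h2, AEEqFun.coeFn_add a c,
    AEEqFun.coeFn_add b d] with x g1 g2 g3 g4
  rw [g3, g4, Pi.add_apply, Pi.add_apply]
  exact add_le_add g1 g2

theorem add_nonneg' {a b : X →ₘ[μ] ℝ} (h1 : 0 ≤ a) (h2 : 0 ≤ b) : 0 ≤ a + b := by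
  simpa using add_le_add' h1 h2

theorem pdi_mul_tendsto (hac2 : m' ≪ μ) [IsProbabilityMeasure m']
    {c : X →ₘ[μ] ℝ} (hc : 0 ≤ c) {h : ℕ → X →ₘ[μ] ℝ} (hh : ∀ k, 0 ≤ h k)
    (hlim : Tendsto (fun k => pdi m' (h k)) atTop (nhds 0)) :
    Tendsto (fun k => pdi m' (c * h k)) atTop (nhds 0) := by
  refine tendsto_of_subseq_tendsto fun ns hns => ?_
  have hmeas : TendstoInMeasure m' (fun i x => min (h (ns i) x) 1) atTop (0 : X → ℝ) := by
    rw [tendstoInMeasure_iff_dist]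
    intro ε hε
    have hbound : ∀ i, (m' {x | ε ≤ dist (min (h (ns i) x) 1) ((0:X → ℝ) x)}).toReal ≤
        pdi m' (h (ns i)) / ε := by
      intro i
      have hset : {x | ε ≤ dist (min (h (ns i) x) 1) ((0:X → ℝ) x)} =
          {x | ε ≤ |min (h (ns i) x) 1|} := by
        ext x; simp [Real.dist_0_eq_abs]
      have hmarkov := mul_meas_ge_le_integral_of_nonneg (μ := m')
        (f := fun x => |min (h (ns i) x) 1|) (Eventually.of_forall fun x => abs_nonneg _)
        ((intble hac2 (hh (ns i))).abs) ε
      have hint : ∫ x, |min (h (ns i) x) 1| ∂m' = pdi m' (h (ns i)) := by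
        refine integral_congr_ae ?_
        filter_upwards [ae_mono hac2 (nonneg_ae (hh (ns i)))] with x hx
        rw [abs_of_nonneg (le_min hx zero_le_one)]
      rw [hint] at hmarkov
      rw [hset, le_div_iff₀ hε]
      rw [measureReal_def] at hmarkov; linarith [hmarkov]
    have h2 : Tendsto
        (fun i => (m' {x | ε ≤ dist (min (h (ns i) x) 1) ((0:X → ℝ) x)}).toReal)
        atTop (nhds 0) := by
      refine squeeze_zero (fun i => ENNReal.toReal_nonneg) hbound ?_
      simpa using (hlim.comp hns).div_const ε
    exact (ENNReal.tendsto_toReal_iff (fun i => measure_ne_top m' _) (by simp)).mp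
      (by simpa using h2)
  obtain ⟨ms, -, hae⟩ := hmeas.exists_seq_tendsto_ae
  refine ⟨ms, ?_⟩
  have h0 : (0:ℝ) = ∫ _, (0:ℝ) ∂m' := by simp
  rw [show (nhds (0:ℝ)) = nhds (∫ _, (0:ℝ) ∂m') by rw [← h0]]
  refine tendsto_integral_of_dominated_convergence (bound := fun _ => 1)
    (fun i => meas' hac2 _) (integrable_const 1) (fun i => ?_) ?_
  · filter_upwards [ae_mono hac2 (nonneg_ae (mul_nonneg' hc (hh (ns (ms i)))))] with x hx
    rw [Real.norm_eq_abs, abs_le]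
    refine ⟨by have := le_min hx (zero_le_one (α := ℝ)); linarith, min_le_right _ _⟩
  · filter_upwards [hae, ae_mono hac2 (nonneg_ae hc),
      ae_mono hac2 (ae_all_iff.2 fun k => nonneg_ae (hh k)),
      ae_mono hac2 (ae_all_iff.2 fun k => (AEEqFun.coeFn_mul c (h k) : _))]
      with x hx hcx hhx hmul
    have hx0 : Tendsto (fun i => min (h (ns (ms i)) x) 1) atTop (nhds 0) := by
      simpa using hx
    have hhx0 : Tendsto (fun i => h (ns (ms i)) x) atTop (nhds 0) := by
      rw [Metric.tendsto_atTop] at hx0 ⊢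
      intro ε hε
      obtain ⟨N, hN⟩ := hx0 (min ε 1) (lt_min hε zero_lt_one)
      refine ⟨N, fun i hi => ?_⟩
      have hd := hN i hi
      rw [Real.dist_0_eq_abs, abs_of_nonneg (le_min (hhx _) zero_le_one)] at hd
      rw [Real.dist_0_eq_abs, abs_of_nonneg (hhx _)]
      rcases le_total (h (ns (ms i)) x) 1 with h1 | h1
      · rw [min_eq_left h1] at hd
        exact lt_of_lt_of_le hd (min_le_left _ _)
      · rw [min_eq_right h1] at hd
        have := min_le_right ε 1
        linarith
    have hmul0 : Tendsto (fun i => (c * h (ns (ms i))) x) atTop (nhds 0) := by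
      have : Tendsto (fun i => c x * h (ns (ms i)) x) atTop (nhds (c x * 0)) :=
        tendsto_const_nhds.mul hhx0
      rw [mul_zero] at this
      refine this.congr fun i => ?_
      rw [hmul (ns (ms i))]; rfl
    have := hmul0.min (tendsto_const_nhds (x := (1:ℝ)))
    rw [min_eq_left zero_le_one] at this
    exact this


section modlem
variable {μ m' : Measure X}

theorem abs_zero'' : |(0 : X →ₘ[μ] ℝ)| = 0 := by
  refine AEEqFun.ext ?_
  filter_upwards [AEEqFun.coeFn_abs (0 : X →ₘ[μ] ℝ),
    AEEqFun.coeFn_zero (β := ℝ) (μ := μ)] with x h1 h2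
  rw [h1, h2, Pi.zero_apply, abs_zero]

theorem abs_nonneg'' (f : X →ₘ[μ] ℝ) : 0 ≤ |f| := by
  rw [le_iff]
  filter_upwards [AEEqFun.coeFn_abs f, AEEqFun.coeFn_zero (β := ℝ) (μ := μ)] with x h1 h2
  rw [h1, h2, Pi.zero_apply]; exact abs_nonneg _

theorem abs_neg_one'' : |(-1 : X →ₘ[μ] ℝ)| = 1 := by
  refine AEEqFun.ext ?_
  filter_upwards [AEEqFun.coeFn_abs (-1 : X →ₘ[μ] ℝ),
    AEEqFun.coeFn_neg (1 : X →ₘ[μ] ℝ), AEEqFun.coeFn_one (β := ℝ) (μ := μ)] with x h1 h2 h3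
  rw [h1, h2, Pi.neg_apply, h3, Pi.one_apply, abs_neg, abs_one]

variable (M : NormedL0Module μ m')

theorem pn_zero : M.pn 0 = 0 := by
  have h := M.pn_smul 0 0
  rwa [zero_smul, abs_zero'', zero_mul] at h

theorem pn_neg (a : M.carrier) : M.pn (-a) = M.pn a := by
  have h := M.pn_smul (-1) a
  rwa [neg_one_smul, abs_neg_one'', one_mul] at h

theorem pn_sub_symm (a b : M.carrier) : M.pn (a - b) = M.pn (b - a) := by
  rw [← neg_sub b a, pn_neg]

theorem pn_tri (a b c : M.carrier) : M.pn (a - c) ≤ M.pn (a - b) + M.pn (b - c) := by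
  have h := M.pn_add_le (a - b) (b - c)
  rwa [sub_add_sub_cancel] at h

theorem pd_def (a b : M.carrier) :
    pd m' M.pn (fun a b => a - b) a b = pdi m' (M.pn (a - b)) := rfl

theorem pdi_zero' (hac2 : m' ≪ μ) : pdi m' (0 : X →ₘ[μ] ℝ) = 0 := by
  rw [pdi]
  rw [integral_congr_ae (g := fun _ => (0:ℝ))
    (by filter_upwards [ae_mono hac2 (AEEqFun.coeFn_zero (β := ℝ) (μ := μ) : _)] with x hx
        rw [hx, Pi.zero_apply, min_eq_left zero_le_one])]
  simp

theorem pd_self (hac2 : m' ≪ μ) (a : M.carrier) :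
    pd m' M.pn (fun a b => a - b) a a = 0 := by
  rw [pd_def, sub_self, pn_zero, pdi_zero' hac2]

theorem pd_symm (a b : M.carrier) :
    pd m' M.pn (fun a b => a - b) a b = pd m' M.pn (fun a b => a - b) b a := by
  rw [pd_def, pd_def, pn_sub_symm]

theorem pd_triangle (hac2 : m' ≪ μ) [IsProbabilityMeasure m'] (a b c : M.carrier) :
    pd m' M.pn (fun a b => a - b) a c ≤
      pd m' M.pn (fun a b => a - b) a b + pd m' M.pn (fun a b => a - b) b c := by
  rw [pd_def, pd_def, pd_def]
  exact (pdi_mono hac2 (M.pn_nonneg _) (pn_tri M a b c)).trans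
    (pdi_add_le hac2 (M.pn_nonneg _) (M.pn_nonneg _))

theorem pd_nonneg (hac2 : m' ≪ μ) (a b : M.carrier) :
    0 ≤ pd m' M.pn (fun a b => a - b) a b :=
  pdi_nonneg hac2 (M.pn_nonneg _)

end modlem

section sys
variable {μ m' : Measure X} [IsProbabilityMeasure m']
variable (hac1 : μ ≪ m') (hac2 : m' ≪ μ)
variable (M : NormedL0Module μ m') (v : ℕ → M.carrier)

include hac1 hac2

set_option linter.unusedSectionVars false

/-- The closure of the span of `{v_0, …, v_n}`. -/
def CnSet (n : ℕ) : Set M.carrier :=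
  {w | ∀ ε > 0, ∃ y ∈ Submodule.span (X →ₘ[μ] ℝ) (v '' Set.Iic n),
    pd m' M.pn (fun a b => a - b) w y < ε}

theorem CnSet_closed {n : ℕ} {w : M.carrier}
    (h : ∀ δ > 0, ∃ u ∈ CnSet M v n, pd m' M.pn (fun a b => a - b) w u < δ) :
    w ∈ CnSet M v n := by
  intro ε hε
  obtain ⟨u, hu, hwu⟩ := h (ε / 2) (by linarith)
  obtain ⟨y, hy, huy⟩ := hu (ε / 2 - pd m' M.pn (fun a b => a - b) w u) (by linarith)
  exact ⟨y, hy, lt_of_le_of_lt (pd_triangle M hac2 w u y) (by linarith)⟩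

theorem approx_seq {n : ℕ} {w : M.carrier} (hw : w ∈ CnSet M v n) :
    ∃ y : ℕ → M.carrier, (∀ k, y k ∈ Submodule.span (X →ₘ[μ] ℝ) (v '' Set.Iic n)) ∧
      Tendsto (fun k => pdi m' (M.pn (w - y k))) atTop (nhds 0) := by
  choose y hy hpd using fun k : ℕ => hw (1 / (k + 1)) (by positivity)
  refine ⟨y, hy, squeeze_zero (fun k => pdi_nonneg hac2 (M.pn_nonneg _))
    (fun k => (hpd k).le) tendsto_one_div_add_atTop_nhds_zero_nat⟩

/-- The closed submodule generated by `{v_0, …, v_n}`. -/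
def Cn (n : ℕ) : Submodule (X →ₘ[μ] ℝ) M.carrier where
  carrier := CnSet M v n
  zero_mem' := fun ε hε => ⟨0, Submodule.zero_mem _, by rw [pd_self M hac2]; exact hε⟩
  add_mem' := by
    intro a b ha hb ε hε
    obtain ⟨y, hy, hay⟩ := ha (ε / 2) (by linarith)
    obtain ⟨z, hz, hbz⟩ := hb (ε / 2) (by linarith)
    refine ⟨y + z, Submodule.add_mem _ hy hz, ?_⟩
    have h1 : M.pn (a + b - (y + z)) ≤ M.pn (a - y) + M.pn (b - z) := by
      have := M.pn_add_le (a - y) (b - z)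
      rwa [show a - y + (b - z) = a + b - (y + z) by abel] at this
    calc pd m' M.pn (fun a b => a - b) (a + b) (y + z)
        = pdi m' (M.pn (a + b - (y + z))) := rfl
      _ ≤ pdi m' (M.pn (a - y) + M.pn (b - z)) :=
          pdi_mono hac2 (M.pn_nonneg _) h1
      _ ≤ pdi m' (M.pn (a - y)) + pdi m' (M.pn (b - z)) :=
          pdi_add_le hac2 (M.pn_nonneg _) (M.pn_nonneg _)
      _ < ε := by rw [pd_def] at hay hbz; linarith
  smul_mem' := by
    intro c w hw ε hε
    obtain ⟨y, hy, hlim⟩ := approx_seq hac1 hac2 M v hw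
    have hmul : Tendsto (fun k => pdi m' (|c| * M.pn (w - y k))) atTop (nhds 0) :=
      pdi_mul_tendsto hac2 (abs_nonneg'' c) (fun k => M.pn_nonneg _) hlim
    obtain ⟨k, hk⟩ := (hmul.eventually (gt_mem_nhds hε)).exists
    refine ⟨c • y k, Submodule.smul_mem _ c (hy k), ?_⟩
    rw [pd_def, ← smul_sub, M.pn_smul]
    exact hk

/-- `M_n` as a normed `L⁰`-module. -/
def objn (n : ℕ) : NormedL0Module μ m' where
  carrier := ↥(Cn hac1 hac2 M v n)
  ag := inferInstance
  mo := inferInstance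
  pn x := M.pn x.val
  pn_nonneg x := M.pn_nonneg _
  pn_add_le x y := M.pn_add_le _ _
  pn_smul f x := M.pn_smul _ _
  pn_eq_zero x hx := by
    have := M.pn_eq_zero _ hx
    exact Subtype.ext this
  complete := by
    intro u hu
    obtain ⟨a, ha⟩ := M.complete (fun k => (u k).val) hu
    have hmem : a ∈ CnSet M v n := by
      refine CnSet_closed hac1 hac2 M v fun δ hδ => ?_
      have : Tendsto (fun k => pd m' M.pn (fun a b => a - b) ((u k).val) a) atTop (nhds 0) := ha
      obtain ⟨k, hk⟩ := (this.eventually (gt_mem_nhds hδ)).exists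
      exact ⟨(u k).val, (u k).2, by rw [pd_symm]; exact hk⟩
    exact ⟨⟨a, hmem⟩, ha⟩

theorem CnSet_mono {i j : ℕ} (h : i ≤ j) : CnSet M v i ⊆ CnSet M v j := by
  intro w hw ε hε
  obtain ⟨y, hy, hwy⟩ := hw ε hε
  exact ⟨y, Submodule.span_mono (Set.image_mono (Set.Iic_subset_Iic.mpr h)) hy, hwy⟩

/-- The direct system of the `M_n`. -/
def Sys : DirSystem μ m' ℕ where
  obj := objn hac1 hac2 M v
  map i j h := ⟨fun x => ⟨x.val, CnSet_mono hac1 hac2 M v h x.2⟩, fun _ _ => rfl, fun _ _ => rfl,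
    fun _ => le_rfl⟩
  map_self i x := rfl
  map_comp i j k hij hjk x := rfl

/-- The canonical inclusions. -/
def cann (n : ℕ) : NMHom ((Sys hac1 hac2 M v).obj n) M :=
  ⟨fun x => x.val, fun _ _ => rfl, fun _ _ => rfl, fun _ => le_rfl⟩

end sys

section univ
variable {μ m' : Measure X} [IsProbabilityMeasure m']
variable (hac1 : μ ≪ m') (hac2 : m' ≪ μ)
variable (M : NormedL0Module μ m') (v : ℕ → M.carrier)

theorem nm_map_sub {A B : NormedL0Module μ m'} (F : NMHom A B) (a b : A.carrier) :
    F.toFun (a - b) = F.toFun a - F.toFun b := by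
  have hneg : F.toFun (-b) = -F.toFun b := by
    have h := F.map_smul' (-1) b
    rwa [neg_one_smul, neg_one_smul] at h
  rw [sub_eq_add_neg, F.map_add', hneg, sub_eq_add_neg]

theorem pn_le_add (A : NormedL0Module μ m') (a b : A.carrier) :
    A.pn a ≤ A.pn (a - b) + A.pn b := by
  have h := A.pn_add_le (a - b) b
  rwa [sub_add_cancel] at h

include hac1 hac2

set_option linter.unusedSectionVars false in
theorem v_mem (n : ℕ) : v n ∈ CnSet M v n := by
  intro ε hε
  exact ⟨v n, Submodule.subset_span ⟨n, Set.mem_Iic.2 le_rfl, rfl⟩,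
    by rw [pd_self M hac2]; exact hε⟩

theorem universal_lemma
    (hdense : ∀ w : M.carrier, ∀ ε > 0, ∃ n, pd m' M.pn (fun a b => a - b) w (v n) < ε)
    (T : NormedL0Module μ m') (psi : ∀ n, NMHom ((Sys hac1 hac2 M v).obj n) T)
    (hpsi : ∀ i j (h : i ≤ j) x,
      (psi j).toFun (((Sys hac1 hac2 M v).map i j h).toFun x) = (psi i).toFun x) :
    ∃! F : NMHom M T,
      ∀ n x, F.toFun ((cann hac1 hac2 M v n).toFun x) = (psi n).toFun x := by
  classical
  -- approximating sequences
  have hchoice : ∀ (w : M.carrier) (k : ℕ), ∃ n,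
      pd m' M.pn (fun a b => a - b) w (v n) < 1 / (k + 1) :=
    fun w k => hdense w _ (by positivity)
  choose nn hnn using hchoice
  set u : M.carrier → ℕ → M.carrier := fun w k => v (nn w k) with hu_def
  have hlim : ∀ w, Tendsto (fun k => pdi m' (M.pn (w - u w k))) atTop (nhds 0) :=
    fun w => squeeze_zero (fun k => pdi_nonneg hac2 (M.pn_nonneg _))
      (fun k => (hnn w k).le) tendsto_one_div_add_atTop_nhds_zero_nat
  set xk : ∀ (w : M.carrier) (k : ℕ), ((Sys hac1 hac2 M v).obj (nn w k)).carrier :=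
    fun w k => ⟨u w k, v_mem hac1 hac2 M v (nn w k)⟩ with hxk_def
  set tk : M.carrier → ℕ → T.carrier := fun w k => (psi (nn w k)).toFun (xk w k) with htk_def
  -- the fundamental bound between values of the psi's
  have hb : ∀ i j (x : ((Sys hac1 hac2 M v).obj i).carrier)
      (y : ((Sys hac1 hac2 M v).obj j).carrier),
      T.pn ((psi i).toFun x - (psi j).toFun y) ≤ M.pn (x.val - y.val) := by
    intro i j x y
    have hx := hpsi i (max i j) (le_max_left i j) x
    have hy := hpsi j (max i j) (le_max_right i j) y
    set x' := ((Sys hac1 hac2 M v).map i (max i j) (le_max_left i j)).toFun x with hx'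
    set y' := ((Sys hac1 hac2 M v).map j (max i j) (le_max_right i j)).toFun y with hy'
    have heq : (psi i).toFun x - (psi j).toFun y = (psi (max i j)).toFun (x' - y') := by
      rw [nm_map_sub, hx, hy]
    rw [heq]
    have hbd := (psi (max i j)).bound' (x' - y')
    have hval : ((x' - y' : ((Sys hac1 hac2 M v).obj (max i j)).carrier)).val
        = x.val - y.val := rfl
    have : ((Sys hac1 hac2 M v).obj (max i j)).pn (x' - y') = M.pn (x.val - y.val) := by
      rw [← hval]; rfl
    rwa [this] at hbd
  -- the predicate characterizing the extension
  set P : M.carrier → T.carrier → Prop := fun w t =>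
    ∀ n (x : ((Sys hac1 hac2 M v).obj n).carrier),
      T.pn (t - (psi n).toFun x) ≤ M.pn (w - x.val) with hP_def
  -- uniqueness of the extension value
  have hPuniq : ∀ w t t', P w t → P w t' → t = t' := by
    intro w t t' ht ht'
    have he : T.pn (t - t') = 0 := by
      refine key_eq hac1 hac2 (T.pn_nonneg _)
        (h := fun k => M.pn (w - u w k) + M.pn (w - u w k))
        (c := fun k => pdi m' (M.pn (w - u w k)) + pdi m' (M.pn (w - u w k)))
        (fun k => add_nonneg' (M.pn_nonneg _) (M.pn_nonneg _)) (fun k => ?_)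
        (fun k => pdi_add_le hac2 (M.pn_nonneg _) (M.pn_nonneg _))
        (by simpa using (hlim w).add (hlim w))
      have h1 : T.pn (t - t') ≤ T.pn (t - tk w k) + T.pn (tk w k - t') :=
        pn_tri T t (tk w k) t'
      have h2 : T.pn (t - tk w k) ≤ M.pn (w - u w k) := ht (nn w k) (xk w k)
      have h3 : T.pn (tk w k - t') ≤ M.pn (w - u w k) := by
        rw [pn_sub_symm]
        exact ht' (nn w k) (xk w k)
      exact h1.trans (add_le_add' h2 h3)
    have := T.pn_eq_zero _ he
    exact sub_eq_zero.mp this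
  -- existence of the extension value
  have hPex : ∀ w, ∃ t, P w t := by
    intro w
    have hcau : ∀ ε > 0, ∃ K, ∀ n ≥ K, ∀ p ≥ K,
        pd m' T.pn (fun a b => a - b) (tk w n) (tk w p) < ε := by
      intro ε hε
      obtain ⟨K, hK⟩ := Filter.eventually_atTop.1
        (tendsto_one_div_add_atTop_nhds_zero_nat.eventually
          (gt_mem_nhds (show (0:ℝ) < ε / 2 by linarith)))
      refine ⟨K, fun n hn p hp => ?_⟩
      have h1 : pd m' T.pn (fun a b => a - b) (tk w n) (tk w p) ≤
          pdi m' (M.pn (u w n - u w p)) := by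
        rw [pd_def]
        exact pdi_mono hac2 (T.pn_nonneg _) (hb _ _ (xk w n) (xk w p))
      have h2 : pdi m' (M.pn (u w n - u w p)) ≤
          pd m' M.pn (fun a b => a - b) (u w n) w + pd m' M.pn (fun a b => a - b) w (u w p) :=
        pd_triangle M hac2 (u w n) w (u w p)
      have h3 : pd m' M.pn (fun a b => a - b) (u w n) w < 1 / (n + 1) := by
        rw [pd_symm]; exact hnn w n
      have h4 : pd m' M.pn (fun a b => a - b) w (u w p) < 1 / (p + 1) := hnn w p
      have h5 := hK n hn
      have h6 := hK p hp
      calc pd m' T.pn (fun a b => a - b) (tk w n) (tk w p)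
          ≤ pdi m' (M.pn (u w n - u w p)) := h1
        _ < ε := by linarith
    obtain ⟨t, ht⟩ := T.complete (tk w) hcau
    refine ⟨t, fun n x => ?_⟩
    have htlim : Tendsto (fun k => pdi m' (T.pn (t - tk w k))) atTop (nhds 0) := by
      refine ht.congr fun k => ?_
      rw [pd_def, pn_sub_symm]
    refine key_le hac1 hac2
      (h := fun k => T.pn (t - tk w k) + M.pn (w - u w k))
      (c := fun k => pdi m' (T.pn (t - tk w k)) + pdi m' (M.pn (w - u w k)))
      (fun k => add_nonneg' (T.pn_nonneg _) (M.pn_nonneg _)) (fun k => ?_)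
      (fun k => pdi_add_le hac2 (T.pn_nonneg _) (M.pn_nonneg _))
      (by simpa using htlim.add (hlim w))
    have h1 : T.pn (t - (psi n).toFun x) ≤ T.pn (t - tk w k) + T.pn (tk w k - (psi n).toFun x) :=
      pn_tri T _ _ _
    have h2 : T.pn (tk w k - (psi n).toFun x) ≤ M.pn (u w k - x.val) := hb _ _ _ _
    have h3 : M.pn (u w k - x.val) ≤ M.pn (u w k - w) + M.pn (w - x.val) := pn_tri M _ _ _
    have h4 : M.pn (u w k - w) = M.pn (w - u w k) := pn_sub_symm M _ _
    have h5 : T.pn (t - (psi n).toFun x) ≤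
        T.pn (t - tk w k) + (M.pn (w - u w k) + M.pn (w - x.val)) := by
      refine h1.trans (add_le_add' le_rfl (h2.trans ?_))
      rw [h4] at h3; exact h3
    have heq : T.pn (t - tk w k) + (M.pn (w - u w k) + M.pn (w - x.val)) =
        M.pn (w - x.val) + (T.pn (t - tk w k) + M.pn (w - u w k)) := by ring
    rwa [heq] at h5
  -- the extension
  set Fd : M.carrier → T.carrier := fun w => (hPex w).choose with hFd_def
  have hF : ∀ w, P w (Fd w) := fun w => (hPex w).choose_spec
  -- agreement with the psi's
  have hagree : ∀ n (x : ((Sys hac1 hac2 M v).obj n).carrier),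
      Fd x.val = (psi n).toFun x := by
    intro n x
    exact hPuniq x.val _ _ (hF x.val) (fun m y => hb n m x y)
  -- additivity
  have hadd : ∀ w w', Fd (w + w') = Fd w + Fd w' := by
    intro w w'
    refine (hPuniq (w + w') _ _ (hF _) ?_).symm.symm
    intro n z
    set N : ℕ → ℕ := fun k => max (nn w k) (nn w' k) with hN_def
    refine key_le hac1 hac2
      (h := fun k => (M.pn (w - u w k) + M.pn (w - u w k)) +
        (M.pn (w' - u w' k) + M.pn (w' - u w' k)))
      (c := fun k => (pdi m' (M.pn (w - u w k)) + pdi m' (M.pn (w - u w k))) +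
        (pdi m' (M.pn (w' - u w' k)) + pdi m' (M.pn (w' - u w' k))))
      (fun k => add_nonneg' (add_nonneg' (M.pn_nonneg _) (M.pn_nonneg _))
        (add_nonneg' (M.pn_nonneg _) (M.pn_nonneg _)))
      (fun k => ?_)
      (fun k => (pdi_add_le hac2 (add_nonneg' (M.pn_nonneg _) (M.pn_nonneg _))
          (add_nonneg' (M.pn_nonneg _) (M.pn_nonneg _))).trans
        (add_le_add (pdi_add_le hac2 (M.pn_nonneg _) (M.pn_nonneg _))
          (pdi_add_le hac2 (M.pn_nonneg _) (M.pn_nonneg _))))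
      (by simpa using (((hlim w).add (hlim w)).add ((hlim w').add (hlim w'))))
    -- the chain of inequalities
    set x1 : ((Sys hac1 hac2 M v).obj (N k)).carrier :=
      ((Sys hac1 hac2 M v).map (nn w k) (N k) (le_max_left _ _)).toFun (xk w k) with hx1
    set x2 : ((Sys hac1 hac2 M v).obj (N k)).carrier :=
      ((Sys hac1 hac2 M v).map (nn w' k) (N k) (le_max_right _ _)).toFun (xk w' k) with hx2
    have hsum : (psi (N k)).toFun (x1 + x2) = tk w k + tk w' k := by
      rw [(psi (N k)).map_add', hpsi, hpsi]
    have h1 : T.pn (Fd w + Fd w' - (psi n).toFun z) ≤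
        T.pn (Fd w + Fd w' - (tk w k + tk w' k)) +
          T.pn ((tk w k + tk w' k) - (psi n).toFun z) := pn_tri T _ _ _
    have h2 : T.pn (Fd w + Fd w' - (tk w k + tk w' k)) ≤
        M.pn (w - u w k) + M.pn (w' - u w' k) := by
      have heq : Fd w + Fd w' - (tk w k + tk w' k)
          = (Fd w - tk w k) + (Fd w' - tk w' k) := by abel
      rw [heq]
      exact (T.pn_add_le _ _).trans
        (add_le_add' (hF w (nn w k) (xk w k)) (hF w' (nn w' k) (xk w' k)))
    have h3 : T.pn ((tk w k + tk w' k) - (psi n).toFun z) ≤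
        M.pn (u w k + u w' k - z.val) := by
      rw [← hsum]
      have := hb (N k) n (x1 + x2) z
      have hval : ((x1 + x2 : ((Sys hac1 hac2 M v).obj (N k)).carrier)).val
          = u w k + u w' k := rfl
      rwa [hval] at this
    have h4 : M.pn (u w k + u w' k - z.val) ≤
        M.pn (w - u w k) + (M.pn (w' - u w' k) + M.pn (w + w' - z.val)) := by
      have heq : u w k + u w' k - z.val =
          (u w k - w) + ((u w' k - w') + (w + w' - z.val)) := by abel
      rw [heq]
      refine (M.pn_add_le _ _).trans (add_le_add' ?_ ((M.pn_add_le _ _).trans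
        (add_le_add' ?_ le_rfl)))
      · rw [pn_sub_symm]
      · rw [pn_sub_symm]
    have h5 : T.pn (Fd w + Fd w' - (psi n).toFun z) ≤
        (M.pn (w - u w k) + M.pn (w' - u w' k)) +
          (M.pn (w - u w k) + (M.pn (w' - u w' k) + M.pn (w + w' - z.val))) :=
      h1.trans (add_le_add' h2 (h3.trans h4))
    have heq : (M.pn (w - u w k) + M.pn (w' - u w' k)) +
          (M.pn (w - u w k) + (M.pn (w' - u w' k) + M.pn (w + w' - z.val))) =
        M.pn (w + w' - z.val) + ((M.pn (w - u w k) + M.pn (w - u w k)) +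
          (M.pn (w' - u w' k) + M.pn (w' - u w' k))) := by ring
    rwa [heq] at h5
  -- homogeneity
  have hsmul : ∀ (f : X →ₘ[μ] ℝ) w, Fd (f • w) = f • Fd w := by
    intro f w
    refine (hPuniq (f • w) _ _ (hF _) ?_).symm.symm
    intro n z
    refine key_le hac1 hac2
      (h := fun k => (|f| + |f|) * M.pn (w - u w k))
      (c := fun k => pdi m' ((|f| + |f|) * M.pn (w - u w k)))
      (fun k => mul_nonneg' (add_nonneg' (abs_nonneg'' f) (abs_nonneg'' f)) (M.pn_nonneg _))
      (fun k => ?_) (fun k => le_rfl)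
      (pdi_mul_tendsto hac2 (add_nonneg' (abs_nonneg'' f) (abs_nonneg'' f))
        (fun k => M.pn_nonneg _) (hlim w))
    have h1 : T.pn (f • Fd w - (psi n).toFun z) ≤
        T.pn (f • Fd w - f • tk w k) + T.pn (f • tk w k - (psi n).toFun z) := pn_tri T _ _ _
    have h2 : T.pn (f • Fd w - f • tk w k) ≤ |f| * M.pn (w - u w k) := by
      rw [← smul_sub, T.pn_smul]
      exact mul_le_mul_left' (abs_nonneg'' f) (hF w (nn w k) (xk w k))
    have h3 : T.pn (f • tk w k - (psi n).toFun z) ≤ M.pn (f • u w k - z.val) := by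
      have hsm : f • tk w k = (psi (nn w k)).toFun (f • xk w k) := by
        rw [(psi (nn w k)).map_smul']
      rw [hsm]
      have := hb (nn w k) n (f • xk w k) z
      have hval : ((f • xk w k : ((Sys hac1 hac2 M v).obj (nn w k)).carrier)).val
          = f • u w k := rfl
      rwa [hval] at this
    have h4 : M.pn (f • u w k - z.val) ≤
        |f| * M.pn (w - u w k) + M.pn (f • w - z.val) := by
      have heq : f • u w k - z.val = (f • u w k - f • w) + (f • w - z.val) := by abel
      rw [heq]
      refine (M.pn_add_le _ _).trans (add_le_add' ?_ le_rfl)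
      rw [← smul_sub, M.pn_smul, pn_sub_symm]
    have h5 : T.pn (f • Fd w - (psi n).toFun z) ≤
        (|f| * M.pn (w - u w k)) +
          (|f| * M.pn (w - u w k) + M.pn (f • w - z.val)) :=
      h1.trans (add_le_add' h2 (h3.trans h4))
    have heq : (|f| * M.pn (w - u w k)) +
          (|f| * M.pn (w - u w k) + M.pn (f • w - z.val)) =
        M.pn (f • w - z.val) + (|f| + |f|) * M.pn (w - u w k) := by ring
    rwa [heq] at h5
  -- boundedness
  have hbound : ∀ w, T.pn (Fd w) ≤ M.pn w := by
    intro w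
    refine key_le hac1 hac2
      (h := fun k => M.pn (w - u w k) + M.pn (w - u w k))
      (c := fun k => pdi m' (M.pn (w - u w k)) + pdi m' (M.pn (w - u w k)))
      (fun k => add_nonneg' (M.pn_nonneg _) (M.pn_nonneg _)) (fun k => ?_)
      (fun k => pdi_add_le hac2 (M.pn_nonneg _) (M.pn_nonneg _))
      (by simpa using (hlim w).add (hlim w))
    have h1 : T.pn (Fd w) ≤ T.pn (Fd w - tk w k) + T.pn (tk w k) := pn_le_add T _ _
    have h2 : T.pn (Fd w - tk w k) ≤ M.pn (w - u w k) := hF w (nn w k) (xk w k)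
    have h3 : T.pn (tk w k) ≤ M.pn (u w k) := (psi (nn w k)).bound' (xk w k)
    have h4 : M.pn (u w k) ≤ M.pn (u w k - w) + M.pn w := pn_le_add M _ _
    have h5 : T.pn (Fd w) ≤ M.pn (w - u w k) + (M.pn (w - u w k) + M.pn w) := by
      refine h1.trans (add_le_add' h2 (h3.trans (h4.trans ?_)))
      exact add_le_add' (le_of_eq (pn_sub_symm M _ _)) le_rfl
    have heq : M.pn (w - u w k) + (M.pn (w - u w k) + M.pn w) =
        M.pn w + (M.pn (w - u w k) + M.pn (w - u w k)) := by ring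
    rwa [heq] at h5
  -- assemble the morphism
  refine ⟨⟨Fd, hadd, hsmul, hbound⟩, fun n x => hagree n x, ?_⟩
  rintro ⟨Gf, Ga, Gs, Gb⟩ hG
  have hGsub : ∀ a b, Gf (a - b) = Gf a - Gf b := by
    intro a b
    have hneg : Gf (-b) = -Gf b := by
      have h := Gs (-1) b
      rwa [neg_one_smul, neg_one_smul] at h
    rw [sub_eq_add_neg, Ga, hneg, sub_eq_add_neg]
  have hGF : Gf = Fd := by
    funext w
    have he : T.pn (Gf w - Fd w) = 0 := by
      refine key_eq hac1 hac2 (T.pn_nonneg _)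
        (h := fun k => M.pn (w - u w k) + M.pn (w - u w k))
        (c := fun k => pdi m' (M.pn (w - u w k)) + pdi m' (M.pn (w - u w k)))
        (fun k => add_nonneg' (M.pn_nonneg _) (M.pn_nonneg _)) (fun k => ?_)
        (fun k => pdi_add_le hac2 (M.pn_nonneg _) (M.pn_nonneg _))
        (by simpa using (hlim w).add (hlim w))
      have h1 : T.pn (Gf w - Fd w) ≤ T.pn (Gf w - tk w k) + T.pn (tk w k - Fd w) :=
        pn_tri T _ _ _
      have h2 : T.pn (Gf w - tk w k) ≤ M.pn (w - u w k) := by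
        have hGu : Gf (u w k) = tk w k := hG (nn w k) (xk w k)
        rw [← hGu, ← hGsub]
        exact Gb _
      have h3 : T.pn (tk w k - Fd w) ≤ M.pn (w - u w k) := by
        rw [pn_sub_symm]
        exact hF w (nn w k) (xk w k)
      exact h1.trans (add_le_add' h2 h3)
    have := T.pn_eq_zero _ he
    exact sub_eq_zero.mp this
  simp only [NMHom.mk.injEq]
  exact hGF

end univ

section transport
variable {μ m' : Measure X}

/-- Transport a normed `L⁰`-module structure along an equivalence of types. -/
noncomputable def transport {A : Type*} (B : NormedL0Module μ m') (e : A ≃ B.carrier) :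
    NormedL0Module μ m' := by
  letI ag : AddCommGroup A := e.addCommGroup
  letI mo : Module (X →ₘ[μ] ℝ) A := e.module _
  have hadd : ∀ a b : A, e (a + b) = e a + e b := fun a b => e.apply_symm_apply _
  have hsub : ∀ a b : A, e (a - b) = e a - e b := fun a b => e.apply_symm_apply _
  have hsmul : ∀ (f : X →ₘ[μ] ℝ) (a : A), e (f • a) = f • e a := fun f a =>
    e.apply_symm_apply _
  have hzero : e (0 : A) = 0 := e.apply_symm_apply _
  exact
  { carrier := A
    ag := ag
    mo := mo
    pn := fun a => B.pn (e a)
    pn_nonneg := fun a => B.pn_nonneg _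
    pn_add_le := fun a b => by
      show B.pn (e (a + b)) ≤ B.pn (e a) + B.pn (e b)
      rw [hadd]; exact B.pn_add_le _ _
    pn_smul := fun f a => by
      show B.pn (e (f • a)) = |f| * B.pn (e a)
      rw [hsmul]; exact B.pn_smul _ _
    pn_eq_zero := fun a ha => by
      have h1 : e a = 0 := B.pn_eq_zero _ ha
      have h2 := congrArg e.symm h1
      rw [e.symm_apply_apply, ← hzero, e.symm_apply_apply] at h2
      exact h2
    complete := by
      intro u hu
      have hpd : ∀ a b : A, pd m' (fun a => B.pn (e a)) (fun a b => a - b) a b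
          = pd m' B.pn (fun a b => a - b) (e a) (e b) := by
        intro a b
        show pdi m' (B.pn (e (a - b))) = pdi m' (B.pn (e a - e b))
        rw [hsub]
      obtain ⟨l, hl⟩ := B.complete (fun k => e (u k)) (by
        intro ε hε
        obtain ⟨K, hK⟩ := hu ε hε
        exact ⟨K, fun n hn p hp => by rw [← hpd]; exact hK n hn p hp⟩)
      refine ⟨e.symm l, ?_⟩
      refine hl.congr fun k => ?_
      rw [hpd, e.apply_symm_apply] }

theorem transport_pn {A : Type*} (B : NormedL0Module μ m') (e : A ≃ B.carrier) (a : A) :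
    (transport B e).pn a = B.pn (e a) := rfl

end transport

section final
variable {μ m' : Measure X} [IsProbabilityMeasure m']
variable (hac1 : μ ≪ m') (hac2 : m' ≪ μ)
variable (M : NormedL0Module μ m') (v : ℕ → M.carrier)

/-- The embedding of a separable module into `ℕ → ℝ` by distances to the dense sequence. -/
def emb : M.carrier → ℕ → ℝ := fun w n => pd m' M.pn (fun a b => a - b) w (v n)

include hac1 hac2

set_option linter.unusedSectionVars false

theorem emb_inj
    (hdense : ∀ w : M.carrier, ∀ ε > 0, ∃ n, pd m' M.pn (fun a b => a - b) w (v n) < ε) :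
    Function.Injective (emb M v) := by
  intro x y hxy
  have hlt : ∀ ε > 0, pd m' M.pn (fun a b => a - b) x y < ε := by
    intro ε hε
    obtain ⟨n, hn⟩ := hdense x (ε / 2) (by linarith)
    have h2 : pd m' M.pn (fun a b => a - b) y (v n) = pd m' M.pn (fun a b => a - b) x (v n) :=
      (congrFun hxy n).symm
    calc pd m' M.pn (fun a b => a - b) x y
        ≤ pd m' M.pn (fun a b => a - b) x (v n) + pd m' M.pn (fun a b => a - b) (v n) y :=
          pd_triangle M hac2 _ _ _
      _ = pd m' M.pn (fun a b => a - b) x (v n) + pd m' M.pn (fun a b => a - b) y (v n) := by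
          rw [pd_symm M (v n) y]
      _ < ε := by rw [h2]; linarith
  have hpd : pd m' M.pn (fun a b => a - b) x y = 0 := by
    by_contra hne
    have hpos : 0 < pd m' M.pn (fun a b => a - b) x y :=
      lt_of_le_of_ne (pd_nonneg M hac2 x y) (Ne.symm hne)
    exact absurd (hlt _ hpos) (lt_irrefl _)
  have h0 : M.pn (x - y) = 0 :=
    pdi_eq_zero hac1 hac2 (M.pn_nonneg _) (le_of_eq hpd)
  exact sub_eq_zero.mp (M.pn_eq_zero _ h0)

variable (hinj : Function.Injective (emb M v))

universe u_aut

/-- A universe-polymorphic copy of the carrier of `M_n`. -/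
def AU (n : ℕ) : Type u_aut :=
  ULift.{u_aut} {q : ℕ → ℝ // q ∈ emb M v '' CnSet M v n}

/-- The identification of the copy with `M_n`. -/
def eqv (n : ℕ) : AU.{u_aut} M v n ≃ ((Sys hac1 hac2 M v).obj n).carrier :=
  Equiv.ulift.trans (Equiv.Set.image (emb M v) (CnSet M v n) hinj).symm

/-- The universe-polymorphic version of `M_n`. -/
noncomputable def objU (n : ℕ) : NormedL0Module μ m' :=
  transport ((Sys hac1 hac2 M v).obj n) (eqv.{u_aut} hac1 hac2 M v hinj n)

/-- The universe-polymorphic direct system. -/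
noncomputable def SysU : DirSystem μ m' ℕ where
  obj := objU.{u_aut} hac1 hac2 M v hinj
  map i j h :=
    { toFun := fun a => (eqv hac1 hac2 M v hinj j).symm
        (((Sys hac1 hac2 M v).map i j h).toFun ((eqv hac1 hac2 M v hinj i) a))
      map_add' := by
        intro a b
        show (eqv.{u_aut} hac1 hac2 M v hinj j).symm (((Sys hac1 hac2 M v).map i j h).toFun ((eqv.{u_aut} hac1 hac2 M v hinj i) ((eqv.{u_aut} hac1 hac2 M v hinj i).symm ((eqv.{u_aut} hac1 hac2 M v hinj i) a + (eqv.{u_aut} hac1 hac2 M v hinj i) b)))) =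
          (eqv.{u_aut} hac1 hac2 M v hinj j).symm ((eqv.{u_aut} hac1 hac2 M v hinj j) ((eqv.{u_aut} hac1 hac2 M v hinj j).symm (((Sys hac1 hac2 M v).map i j h).toFun ((eqv.{u_aut} hac1 hac2 M v hinj i) a))) +
            (eqv.{u_aut} hac1 hac2 M v hinj j) ((eqv.{u_aut} hac1 hac2 M v hinj j).symm (((Sys hac1 hac2 M v).map i j h).toFun ((eqv.{u_aut} hac1 hac2 M v hinj i) b))))
        simp only [Equiv.apply_symm_apply]
        congr 1
      map_smul' := by
        intro f a
        show (eqv.{u_aut} hac1 hac2 M v hinj j).symm (((Sys hac1 hac2 M v).map i j h).toFun ((eqv.{u_aut} hac1 hac2 M v hinj i) ((eqv.{u_aut} hac1 hac2 M v hinj i).symm (f • (eqv.{u_aut} hac1 hac2 M v hinj i) a)))) =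
          (eqv.{u_aut} hac1 hac2 M v hinj j).symm (f • (eqv.{u_aut} hac1 hac2 M v hinj j) ((eqv.{u_aut} hac1 hac2 M v hinj j).symm (((Sys hac1 hac2 M v).map i j h).toFun ((eqv.{u_aut} hac1 hac2 M v hinj i) a))))
        simp only [Equiv.apply_symm_apply]
        congr 1
      bound' := by
        intro a
        show ((Sys hac1 hac2 M v).obj j).pn ((eqv.{u_aut} hac1 hac2 M v hinj j)
            ((eqv hac1 hac2 M v hinj j).symm _)) ≤
          ((Sys hac1 hac2 M v).obj i).pn ((eqv hac1 hac2 M v hinj i) a)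
        rw [Equiv.apply_symm_apply]
        exact ((Sys hac1 hac2 M v).map i j h).bound' _ }
  map_self := by
    intro i a
    show (eqv hac1 hac2 M v hinj i).symm
      (((Sys hac1 hac2 M v).map i i le_rfl).toFun ((eqv hac1 hac2 M v hinj i) a)) = a
    erw [(Sys hac1 hac2 M v).map_self, Equiv.symm_apply_apply]
  map_comp := by
    intro i j k hij hjk a
    apply (eqv hac1 hac2 M v hinj k).injective
    show (eqv hac1 hac2 M v hinj k) ((eqv hac1 hac2 M v hinj k).symm _) =
      (eqv hac1 hac2 M v hinj k) ((eqv hac1 hac2 M v hinj k).symm _)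
    rw [Equiv.apply_symm_apply, Equiv.apply_symm_apply, Equiv.apply_symm_apply]
    exact (Sys hac1 hac2 M v).map_comp i j k hij hjk _

/-- The universe-polymorphic canonical maps. -/
noncomputable def canU (n : ℕ) :
    NMHom ((SysU.{u_aut} hac1 hac2 M v hinj).obj n) M where
  toFun a := ((eqv hac1 hac2 M v hinj n) a).val
  map_add' := by
    intro a b
    show ((eqv.{u_aut} hac1 hac2 M v hinj n) ((eqv.{u_aut} hac1 hac2 M v hinj n).symm
      ((eqv hac1 hac2 M v hinj n) a + (eqv hac1 hac2 M v hinj n) b))).val =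
      ((eqv hac1 hac2 M v hinj n) a).val + ((eqv hac1 hac2 M v hinj n) b).val
    rw [Equiv.apply_symm_apply]
    rfl
  map_smul' := by
    intro f a
    show ((eqv.{u_aut} hac1 hac2 M v hinj n) ((eqv.{u_aut} hac1 hac2 M v hinj n).symm
      (f • (eqv hac1 hac2 M v hinj n) a))).val = f • ((eqv hac1 hac2 M v hinj n) a).val
    rw [Equiv.apply_symm_apply]
    rfl
  bound' := fun a => le_rfl

theorem universal_U
    (hdense : ∀ w : M.carrier, ∀ ε > 0, ∃ n, pd m' M.pn (fun a b => a - b) w (v n) < ε)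
    (T : NormedL0Module μ m')
    (psi' : ∀ n, NMHom ((SysU.{u_aut} hac1 hac2 M v hinj).obj n) T)
    (hpsi' : ∀ i j (h : i ≤ j) x,
      (psi' j).toFun (((SysU.{u_aut} hac1 hac2 M v hinj).map i j h).toFun x) =
        (psi' i).toFun x) :
    ∃! F : NMHom M T,
      ∀ n x, F.toFun ((canU.{u_aut} hac1 hac2 M v hinj n).toFun x) = (psi' n).toFun x := by
  letI instAG : ∀ n, AddCommGroup (AU.{u_aut} M v n) :=
    fun n => ((SysU.{u_aut} hac1 hac2 M v hinj).obj n).ag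
  letI instMo : ∀ n, Module (X →ₘ[μ] ℝ) (AU.{u_aut} M v n) :=
    fun n => ((SysU.{u_aut} hac1 hac2 M v hinj).obj n).mo
  -- transfer the cocone to the subtype system
  set E : ∀ n, AU.{u_aut} M v n ≃ ((Sys hac1 hac2 M v).obj n).carrier :=
    fun n => eqv.{u_aut} hac1 hac2 M v hinj n with hE
  have hEadd : ∀ (n) (x y : ((Sys hac1 hac2 M v).obj n).carrier),
      ((E n).symm (x + y) : ((SysU.{u_aut} hac1 hac2 M v hinj).obj n).carrier) =
        (E n).symm x + (E n).symm y := by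
    intro n x y
    apply (E n).injective
    show _ = (E n) ((E n).symm ((E n) ((E n).symm x) + (E n) ((E n).symm y)))
    simp only [Equiv.apply_symm_apply]
  have hEsmul : ∀ (n) (f : X →ₘ[μ] ℝ) (x : ((Sys hac1 hac2 M v).obj n).carrier),
      ((E n).symm (f • x) : ((SysU.{u_aut} hac1 hac2 M v hinj).obj n).carrier) =
        f • (E n).symm x := by
    intro n f x
    apply (E n).injective
    show _ = (E n) ((E n).symm (f • (E n) ((E n).symm x)))
    simp only [Equiv.apply_symm_apply]
  set psi : ∀ n, NMHom ((Sys hac1 hac2 M v).obj n) T := fun n =>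
    { toFun := fun x => (psi' n).toFun ((E n).symm x)
      map_add' := fun x y => by beta_reduce; erw [hEadd, (psi' n).map_add']
      map_smul' := fun f x => by beta_reduce; erw [hEsmul, (psi' n).map_smul']
      bound' := fun x => by
        have h := (psi' n).bound' ((E n).symm x)
        have h2 : ((SysU.{u_aut} hac1 hac2 M v hinj).obj n).pn ((E n).symm x) =
            ((Sys hac1 hac2 M v).obj n).pn x := by
          show ((Sys hac1 hac2 M v).obj n).pn ((E n) ((E n).symm x)) = _
          rw [Equiv.apply_symm_apply]
        rwa [h2] at h } with hpsi_def
  have hpsi : ∀ i j (h : i ≤ j) x,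
      (psi j).toFun (((Sys hac1 hac2 M v).map i j h).toFun x) = (psi i).toFun x := by
    intro i j h x
    have h1 := hpsi' i j h ((E i).symm x)
    have h2 : ((SysU.{u_aut} hac1 hac2 M v hinj).map i j h).toFun ((E i).symm x) =
        (E j).symm (((Sys hac1 hac2 M v).map i j h).toFun x) := by
      show (E j).symm (((Sys hac1 hac2 M v).map i j h).toFun ((E i) ((E i).symm x))) = _
      rw [Equiv.apply_symm_apply]
    rw [h2] at h1
    exact h1
  obtain ⟨F, hFa, hFu⟩ := universal_lemma hac1 hac2 M v hdense T psi hpsi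
  refine ⟨F, ?_, ?_⟩
  · intro n a
    have h1 : (canU.{u_aut} hac1 hac2 M v hinj n).toFun a =
        (cann hac1 hac2 M v n).toFun ((E n) a) := rfl
    rw [h1, hFa n ((E n) a)]
    show (psi' n).toFun ((E n).symm ((E n) a)) = _
    erw [Equiv.symm_apply_apply]
  · intro G hG
    refine hFu G ?_
    intro n x
    have h1 : (cann hac1 hac2 M v n).toFun x =
        (canU.{u_aut} hac1 hac2 M v hinj n).toFun ((E n).symm x) := by
      show x.val = ((E n) ((E n).symm x)).val
      rw [Equiv.apply_symm_apply]
    rw [h1, hG n ((E n).symm x)]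

end final
end Stmt10

/-- A separable normed `L⁰(μ)`-module `M`, with dense sequence
`(v_n)`, is the direct limit of the direct system of the closed submodules `M_n`
generated by `{v_0, …, v_n}`, with inclusions as transition maps. -/
theorem stmt10 {μ m' : Measure X} [IsProbabilityMeasure m'] (hac1 : μ ≪ m')
    (hac2 : m' ≪ μ) (M : NormedL0Module μ m') (v : ℕ → M.carrier)
    (hdense : ∀ w : M.carrier, ∀ ε > 0, ∃ n, pd m' M.pn (fun a b => a - b) w (v n) < ε) :
    ∃ (S : DirSystem μ m' ℕ) (can : ∀ n, NMHom (S.obj n) M),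
      (∀ n : ℕ,
        Function.Injective (can n).toFun ∧
        (∀ x, M.pn ((can n).toFun x) = (S.obj n).pn x) ∧
        Set.range (can n).toFun =
          {w | ∀ ε > 0, ∃ y ∈ Submodule.span (X →ₘ[μ] ℝ) (v '' Set.Iic n),
            pd m' M.pn (fun a b => a - b) w y < ε}) ∧
      IsDirectLimit S.obj (fun i j h => (S.map i j h).toFun) M can := by
  have hinj := Stmt10.emb_inj hac1 hac2 M v hdense
  refine ⟨Stmt10.SysU hac1 hac2 M v hinj, Stmt10.canU hac1 hac2 M v hinj,
    fun n => ⟨?_, fun x => rfl, ?_⟩, ?_, ?_⟩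
  · intro a b hab
    exact (Stmt10.eqv hac1 hac2 M v hinj n).injective (Subtype.val_injective hab)
  · have h1 : Set.range (Stmt10.canU hac1 hac2 M v hinj n).toFun =
        Set.range (Subtype.val : ↥(Stmt10.Cn hac1 hac2 M v n) → M.carrier) := by
      erw [← Function.Surjective.range_comp
        (Stmt10.eqv hac1 hac2 M v hinj n).surjective Subtype.val]
      rfl
    rw [h1]
    exact Subtype.range_val
  · intro i j h a
    show ((Stmt10.eqv.{u_3} hac1 hac2 M v hinj j) ((Stmt10.eqv.{u_3} hac1 hac2 M v hinj j).symm
      (((Stmt10.Sys hac1 hac2 M v).map i j h).toFun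
        ((Stmt10.eqv hac1 hac2 M v hinj i) a)))).val = _
    rw [Equiv.apply_symm_apply]
    rfl
  · exact fun T psi hpsi => Stmt10.universal_U hac1 hac2 M v hinj hdense T psi hpsi

end
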